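/- arXiv:chao-dyn/9704006 — 5 statements merged into one kernel-verified Lean document; each statement's English description precedes it below -/
import Mathlib

section
/- For fixed a > 0 and h > 0, and for every real number i, the equation y(t) = i has a unique solution t > 0, where y(t) = ((a²t² - 1)/(2at√(1+t²)))·(h√(1+t²) + a) - t/√(1+t²). -/
open Real

/-- The function `y(t)` arising from the geometry of pantographic orbits in the
elliptical stadium billiard. -/
noncomputable def yfun (a h t : ℝ) : ℝ :=
  ((a ^ 2 * t ^ 2 - 1) / (2 * a * t * Real.sqrt (1 + t ^ 2))) *
      (h * Real.sqrt (1 + t ^ 2) + a) -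
    t / Real.sqrt (1 + t ^ 2)

lemma sqrt_sq1 (t : ℝ) : Real.sqrt (1 + t ^ 2) ^ 2 = 1 + t ^ 2 :=
  Real.sq_sqrt (by positivity)

lemma sqrt_pos1 (t : ℝ) : 0 < Real.sqrt (1 + t ^ 2) :=
  Real.sqrt_pos.mpr (by positivity)

lemma lt_sqrt1 {t : ℝ} (ht : 0 < t) : t < Real.sqrt (1 + t ^ 2) := by
  nlinarith [sqrt_sq1 t, sqrt_pos1 t]

lemma yfun_eq (a h t : ℝ) (ha : 0 < a) (ht : 0 < t) :
    yfun a h t = h * a / 2 * t - h / (2 * a) * (1 / t)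
      + (a ^ 2 - 1) / 2 * (t / Real.sqrt (1 + t ^ 2))
      - 1 / 2 * (Real.sqrt (1 + t ^ 2) / t) := by
  have hs := sqrt_pos1 t
  have hsq := sqrt_sq1 t
  set s := Real.sqrt (1 + t ^ 2) with hsdef
  unfold yfun
  rw [← hsdef]
  field_simp
  linear_combination a * hsq

lemma yfun_strictMonoOn (a h : ℝ) (ha : 0 < a) (hh : 0 < h) :
    StrictMonoOn (yfun a h) (Set.Ioi 0) := by
  intro t1 ht1 t2 ht2 hlt
  simp only [Set.mem_Ioi] at ht1 ht2
  rw [yfun_eq a h t1 ha ht1, yfun_eq a h t2 ha ht2]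
  have hs1 := sqrt_pos1 t1
  have hs2 := sqrt_pos1 t2
  have hq1 := sqrt_sq1 t1
  have hq2 := sqrt_sq1 t2
  set s1 := Real.sqrt (1 + t1 ^ 2)
  set s2 := Real.sqrt (1 + t2 ^ 2)
  have hts1 := lt_sqrt1 ht1
  have hts2 := lt_sqrt1 ht2
  have hΔ : t1 * s2 < t2 * s1 := by
    have h2 : (t1 * s2) ^ 2 < (t2 * s1) ^ 2 := by
      rw [mul_pow, mul_pow, hq1, hq2]; nlinarith
    exact lt_of_pow_lt_pow_left₀ 2 (by positivity) h2
  rw [← sub_pos]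
  have key : (h * a / 2 * t2 - h / (2 * a) * (1 / t2)
        + (a ^ 2 - 1) / 2 * (t2 / s2) - 1 / 2 * (s2 / t2))
      - (h * a / 2 * t1 - h / (2 * a) * (1 / t1)
        + (a ^ 2 - 1) / 2 * (t1 / s1) - 1 / 2 * (s1 / t1))
      = (h * a ^ 2 * (t2 - t1) * (t1 * t2) * (s1 * s2)
          + h * (t2 - t1) * (s1 * s2)
          + a * (t2 * s1 - t1 * s2) * ((a ^ 2 - 1) * (t1 * t2) + s1 * s2))
        / (2 * a * (t1 * t2) * (s1 * s2)) := by
    field_simp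
    ring
  rw [key]
  apply div_pos
  · have hb : 0 < (a ^ 2 - 1) * (t1 * t2) + s1 * s2 := by
      nlinarith [mul_pos ht1 ht2, mul_pos hs1 hs2]
    have h21 : 0 < t2 - t1 := by linarith
    have hD : 0 < t2 * s1 - t1 * s2 := by linarith
    have h1 : 0 < h * a ^ 2 * (t2 - t1) * (t1 * t2) * (s1 * s2) :=
      mul_pos (mul_pos (mul_pos (mul_pos hh (pow_pos ha 2)) h21) (mul_pos ht1 ht2)) (mul_pos hs1 hs2)
    have h2 : 0 < h * (t2 - t1) * (s1 * s2) :=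
      mul_pos (mul_pos hh h21) (mul_pos hs1 hs2)
    have h3 : 0 < a * (t2 * s1 - t1 * s2) * ((a ^ 2 - 1) * (t1 * t2) + s1 * s2) :=
      mul_pos (mul_pos ha hD) hb
    linarith
  · positivity

lemma yfun_le (a h t : ℝ) (ha : 0 < a) (hh : 0 < h) (ht : 0 < t) (ht1 : t ≤ 1) :
    yfun a h t ≤ h * a / 2 + a ^ 2 / 2 - h / (2 * a) * (1 / t) := by
  rw [yfun_eq a h t ha ht]
  have hs := sqrt_pos1 t
  set s := Real.sqrt (1 + t ^ 2)
  have hts : t < s := lt_sqrt1 ht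
  have hu1 : t / s < 1 := (div_lt_one hs).mpr hts
  have hu0 : 0 < t / s := div_pos ht hs
  have hv0 : 0 < s / t := div_pos hs ht
  nlinarith [mul_nonneg (sq_nonneg a) (le_of_lt (sub_pos.mpr hu1)),
    mul_nonneg (mul_pos hh ha).le (sub_nonneg.mpr ht1)]

lemma yfun_ge (a h t : ℝ) (ha : 0 < a) (hh : 0 < h) (ht : 1 ≤ t) :
    h * a / 2 * t - h / (2 * a) - 3 / 2 ≤ yfun a h t := by
  have ht0 : 0 < t := lt_of_lt_of_le one_pos ht
  rw [yfun_eq a h t ha ht0]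
  have hs := sqrt_pos1 t
  have hq := sqrt_sq1 t
  set s := Real.sqrt (1 + t ^ 2)
  have hts : t < s := lt_sqrt1 ht0
  have hu1 : t / s < 1 := (div_lt_one hs).mpr hts
  have hu0 : 0 < t / s := div_pos ht0 hs
  have hs2t : s < 2 * t := by
    have h2 : s ^ 2 < (2 * t) ^ 2 := by nlinarith
    exact lt_of_pow_lt_pow_left₀ 2 (by positivity) h2
  have hv2 : s / t < 2 := (div_lt_iff₀ ht0).mpr (by linarith)
  have h1t : 1 / t ≤ 1 := by rw [div_le_one ht0]; exact ht
  have h1t0 : 0 < 1 / t := by positivity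
  have hha : 0 < h / (2 * a) := by positivity
  nlinarith [mul_le_mul_of_nonneg_left h1t (le_of_lt hha),
    mul_nonneg (sq_nonneg a) (le_of_lt hu0)]

lemma yfun_contOn (a h : ℝ) (ha : 0 < a) :
    ContinuousOn (yfun a h) (Set.Ioi 0) := by
  unfold yfun
  have hs : Continuous fun t : ℝ => Real.sqrt (1 + t ^ 2) := by fun_prop
  apply ContinuousOn.sub
  · apply ContinuousOn.mul
    · apply ContinuousOn.div (by fun_prop) (by fun_prop)
      intro x hx
      simp only [Set.mem_Ioi] at hx
      have := sqrt_pos1 x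
      positivity
    · fun_prop
  · apply ContinuousOn.div (by fun_prop) (by fun_prop)
    intro x hx
    exact ne_of_gt (sqrt_pos1 x)

theorem stmt_2 (a h : ℝ) (ha : 0 < a) (hh : 0 < h) (i : ℝ) :
    ∃! t : ℝ, 0 < t ∧ yfun a h t = i := by
  set C : ℝ := |i| + h * a / 2 + a ^ 2 / 2 + 1 with hC
  have hCpos : 0 < C := by positivity
  set t0 : ℝ := min 1 (h / (2 * a * C)) with ht0def
  have ht0pos : 0 < t0 := lt_min one_pos (by positivity)
  have ht0le1 : t0 ≤ 1 := min_le_left _ _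
  -- lower endpoint: yfun a h t0 ≤ i
  have hlow : yfun a h t0 ≤ i := by
    have h1 : yfun a h t0 ≤ h * a / 2 + a ^ 2 / 2 - h / (2 * a) * (1 / t0) :=
      yfun_le a h t0 ha hh ht0pos ht0le1
    have h2 : t0 ≤ h / (2 * a * C) := min_le_right _ _
    have h3 : 1 / (h / (2 * a * C)) ≤ 1 / t0 :=
      one_div_le_one_div_of_le ht0pos h2
    have h4 : 1 / (h / (2 * a * C)) = 2 * a * C / h := one_div_div _ _
    have h5 : C ≤ h / (2 * a) * (1 / t0) := by
      rw [h4] at h3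
      have := mul_le_mul_of_nonneg_left h3 (le_of_lt (show (0:ℝ) < h / (2 * a) by positivity))
      calc C = h / (2 * a) * (2 * a * C / h) := by field_simp
        _ ≤ h / (2 * a) * (1 / t0) := this
    have habs : -|i| ≤ i := neg_abs_le i
    nlinarith
  -- upper endpoint
  set D : ℝ := (|i| + h / (2 * a) + 2) * (2 / (h * a)) with hD
  set t1 : ℝ := max 1 D with ht1def
  have ht1ge1 : 1 ≤ t1 := le_max_left _ _
  have hhigh : i ≤ yfun a h t1 := by
    have h1 : h * a / 2 * t1 - h / (2 * a) - 3 / 2 ≤ yfun a h t1 :=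
      yfun_ge a h t1 ha hh ht1ge1
    have h2 : D ≤ t1 := le_max_right _ _
    have h3 : h * a / 2 * D = |i| + h / (2 * a) + 2 := by
      rw [hD]; field_simp
    have h4 : h * a / 2 * D ≤ h * a / 2 * t1 :=
      mul_le_mul_of_nonneg_left h2 (by positivity)
    have habs : i ≤ |i| := le_abs_self i
    nlinarith
  have ht01 : t0 ≤ t1 := le_trans ht0le1 ht1ge1
  have hsub : Set.Icc t0 t1 ⊆ Set.Ioi 0 := fun x hx => lt_of_lt_of_le ht0pos hx.1
  have hcont : ContinuousOn (yfun a h) (Set.Icc t0 t1) :=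
    (yfun_contOn a h ha).mono hsub
  obtain ⟨t, htmem, hyt⟩ := intermediate_value_Icc ht01 hcont ⟨hlow, hhigh⟩
  have htpos : 0 < t := lt_of_lt_of_le ht0pos htmem.1
  refine ⟨t, ⟨htpos, hyt⟩, ?_⟩
  rintro t' ⟨ht', hy'⟩
  exact (yfun_strictMonoOn a h ha hh).injOn ht' htpos (hy'.trans hyt.symm)
end

section
/- Fix a with 1 < a < √2. For h > 0 let t_0(a,h) be the unique positive solution of y(t) = 0 where y(t) = ((a²t² - 1)/(2at√(1+t²)))·(h√(1+t²) + a) - t/√(1+t²). Then t_0(a,h) → +∞ as h → 0⁺ (equivalently, the angle λ = arctan t_0 tends to π/2). -/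
open Real Filter

set_option maxHeartbeats 1000000 in
theorem stmt_4 (a : ℝ) (ha₁ : 1 < a) (ha₂ : a < Real.sqrt 2)
    (t₀ : ℝ → ℝ) (ht : ∀ h : ℝ, 0 < h → 0 < t₀ h ∧ yfun a h (t₀ h) = 0) :
    Tendsto t₀ (nhdsWithin 0 (Set.Ioi 0)) atTop := by
  have ha0 : 0 < a := lt_trans one_pos ha₁
  have ha2 : a ^ 2 < 2 := by
    nlinarith [Real.sq_sqrt (show (0:ℝ) ≤ 2 by norm_num), Real.sqrt_nonneg 2]
  rw [tendsto_atTop]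
  intro b
  set M : ℝ := max b 1 with hM
  have hM1 : (1:ℝ) ≤ M := le_max_right _ _
  have hMb : b ≤ M := le_max_left _ _
  have hsM0 : 0 < Real.sqrt (1 + M ^ 2) := Real.sqrt_pos.2 (by nlinarith)
  have hMa : 0 < a ^ 2 * M ^ 2 - 1 := by
    have h1 : (1:ℝ) ≤ M ^ 2 := by nlinarith
    have h2 : (1:ℝ) < a ^ 2 := by nlinarith
    nlinarith
  have hden : 0 < (a ^ 2 * M ^ 2 - 1) * Real.sqrt (1 + M ^ 2) :=
    mul_pos hMa hsM0
  set δ : ℝ := a / ((a ^ 2 * M ^ 2 - 1) * Real.sqrt (1 + M ^ 2)) with hδ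
  have hδpos : 0 < δ := div_pos ha0 hden
  filter_upwards [Ioo_mem_nhdsGT_of_mem
    (show (0:ℝ) ∈ Set.Ico 0 δ from ⟨le_refl 0, hδpos⟩)] with h hh
  obtain ⟨hh0, hhδ⟩ := hh
  obtain ⟨ht0, hy⟩ := ht h hh0
  set t : ℝ := t₀ h with htdef
  by_contra hcon
  push_neg at hcon
  have htM : t < M := lt_of_lt_of_le hcon hMb
  have hs : 0 < Real.sqrt (1 + t ^ 2) := Real.sqrt_pos.2 (by nlinarith)
  have hs2 : Real.sqrt (1 + t ^ 2) ^ 2 = 1 + t ^ 2 := Real.sq_sqrt (by nlinarith)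
  set s : ℝ := Real.sqrt (1 + t ^ 2) with hsdef
  have key : (a ^ 2 * t ^ 2 - 1) * (h * s + a) = 2 * a * t ^ 2 := by
    have hy' : ((a ^ 2 * t ^ 2 - 1) / (2 * a * t * s)) * (h * s + a) = t / s := by
      unfold yfun at hy; linarith
    have h2 : (a ^ 2 * t ^ 2 - 1) * (h * s + a) * s = t * (2 * a * t * s) := by
      field_simp at hy'
      linear_combination s * hy'
    have h3 : (a ^ 2 * t ^ 2 - 1) * (h * s + a) * s = 2 * a * t ^ 2 * s := by
      rw [h2]; ring
    exact mul_right_cancel₀ hs.ne' h3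
  have hX : 0 < a ^ 2 * t ^ 2 - 1 := by
    nlinarith [mul_pos hh0 hs, mul_pos (mul_pos ha0 ht0) ht0]
  have key2 : h * (a ^ 2 * t ^ 2 - 1) * s = a * ((2 - a ^ 2) * t ^ 2 + 1) := by
    linear_combination key
  -- lower bound: a ≤ h * X * s
  have hlow : a ≤ h * (a ^ 2 * t ^ 2 - 1) * s := by
    rw [key2]; nlinarith [sq_nonneg t]
  -- upper bound
  have hsM : s ≤ Real.sqrt (1 + M ^ 2) := Real.sqrt_le_sqrt (by nlinarith)
  have hXM : a ^ 2 * t ^ 2 - 1 < a ^ 2 * M ^ 2 - 1 := by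
    have ht2 : t ^ 2 < M ^ 2 := by nlinarith
    nlinarith [mul_lt_mul_of_pos_left ht2 (show (0:ℝ) < a ^ 2 by positivity)]
  have hup : h * (a ^ 2 * t ^ 2 - 1) * s < δ * ((a ^ 2 * M ^ 2 - 1) * Real.sqrt (1 + M ^ 2)) := by
    have h1 : h * (a ^ 2 * t ^ 2 - 1) * s ≤ h * (a ^ 2 * t ^ 2 - 1) * Real.sqrt (1 + M ^ 2) :=
      mul_le_mul_of_nonneg_left hsM (by positivity)
    have h2 : h * (a ^ 2 * t ^ 2 - 1) < δ * (a ^ 2 * M ^ 2 - 1) :=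
      mul_lt_mul'' hhδ hXM hh0.le hX.le
    calc h * (a ^ 2 * t ^ 2 - 1) * s
        ≤ h * (a ^ 2 * t ^ 2 - 1) * Real.sqrt (1 + M ^ 2) := h1
      _ < δ * (a ^ 2 * M ^ 2 - 1) * Real.sqrt (1 + M ^ 2) :=
          (mul_lt_mul_of_pos_right h2 hsM0)
      _ = δ * ((a ^ 2 * M ^ 2 - 1) * Real.sqrt (1 + M ^ 2)) := by ring
  rw [hδ, div_mul_cancel₀ _ hden.ne'] at hup
  linarith
end

section
/- Let y_i be the unique positive real root of P(y) = y³ + (i/(4))y² - (1/2)y - i/4 (i.e., the case a = √2) for each integer i ≥ 1. Then y_i → 1 as i → ∞, and moreover (i/2)(1 - y_i²) → 1 as i → ∞. -/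
open Filter

theorem stmt_13 (y : ℕ → ℝ)
    (hy : ∀ i : ℕ, 1 ≤ i → 0 < y i ∧
      (y i) ^ 3 + (i / 4) * (y i) ^ 2 - (y i) / 2 - i / 4 = 0) :
    Tendsto y atTop (nhds 1) ∧
    Tendsto (fun i : ℕ => (i / 2 : ℝ) * (1 - (y i) ^ 2)) atTop (nhds 1) := by
  have key : ∀ i : ℕ, 1 ≤ i → 1 - 2 / (i:ℝ) ≤ y i ∧ y i ≤ 1 := by
    intro i hi
    obtain ⟨hpos, heq⟩ := hy i hi
    have hi1 : (1:ℝ) ≤ (i:ℝ) := by exact_mod_cast hi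
    have hip : (0:ℝ) < (i:ℝ) := by linarith
    have hle : y i ≤ 1 := by nlinarith [sq_nonneg (y i), sq_nonneg (y i - 1)]
    refine ⟨?_, hle⟩
    rw [sub_le_iff_le_add, ← sub_le_iff_le_add', le_div_iff₀ hip]
    nlinarith [mul_nonneg (le_of_lt hpos) (sub_nonneg.mpr hle),
      mul_nonneg (sub_nonneg.mpr hi1) (mul_nonneg (le_of_lt hpos) (sub_nonneg.mpr hle))]
  have hlow : Tendsto (fun i : ℕ => 1 - 2 / (i:ℝ)) atTop (nhds 1) := by
    simpa using (tendsto_const_nhds : Tendsto (fun _ : ℕ => (1:ℝ)) atTop (nhds 1)).sub (tendsto_const_div_atTop_nhds_zero_nat (2:ℝ))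
  have hy1 : Tendsto y atTop (nhds 1) := by
    refine tendsto_of_tendsto_of_tendsto_of_le_of_le' hlow tendsto_const_nhds ?_ ?_
    · filter_upwards [eventually_ge_atTop 1] with i hi using (key i hi).1
    · filter_upwards [eventually_ge_atTop 1] with i hi using (key i hi).2
  refine ⟨hy1, ?_⟩
  have h2 : Tendsto (fun i : ℕ => 2 * (y i) ^ 3 - y i) atTop (nhds 1) := by
    have := ((hy1.pow 3).const_mul 2).sub hy1
    norm_num at this
    exact this
  refine h2.congr' ?_
  filter_upwards [eventually_ge_atTop 1] with i hi
  obtain ⟨hpos, heq⟩ := hy i hi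
  linear_combination 2 * heq
end

section
/- Let i ≥ 1 be an integer, a > 1, and let y ∈ (1/a, 1) be a root of P(y) = y³ + (i(a²-1)/(2a²))y² - (1/a²)y - i/(2a²) depending smoothly on a. Then dy/da = -a y²(i + 2y) / (i y(a² - 1) + 3a²y² - 1) < 0. -/
open Filter

theorem stmt_15 (i : ℕ) (hi : 1 ≤ i) (a : ℝ) (ha : 1 < a)
    (y : ℝ → ℝ) (y' : ℝ)
    (hroot : ∀ᶠ b in nhds a,
      2 * b ^ 2 * (y b) ^ 3 + i * (b ^ 2 - 1) * (y b) ^ 2 - 2 * (y b) - i = 0)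
    (hrange : y a ∈ Set.Ioo (1 / a) 1)
    (hderiv : HasDerivAt y y' a) :
    y' = -a * (y a) ^ 2 * (i + 2 * y a) /
        (i * (y a) * (a ^ 2 - 1) + 3 * a ^ 2 * (y a) ^ 2 - 1) ∧
    y' < 0 := by
  obtain ⟨hy1, hy2⟩ := hrange
  have ha0 : 0 < a := lt_trans one_pos ha
  have hy0 : 0 < y a := lt_trans (by positivity) hy1
  have hay : 1 < a * y a := by
    have := (div_lt_iff₀ ha0).mp hy1
    linarith
  have hi1 : (1:ℝ) ≤ (i:ℝ) := by exact_mod_cast hi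
  -- denominator positive
  have hD : 0 < (i:ℝ) * (y a) * (a ^ 2 - 1) + 3 * a ^ 2 * (y a) ^ 2 - 1 := by
    have h1 : 1 < a ^ 2 * (y a) ^ 2 := by nlinarith
    have ha2 : 0 < a ^ 2 - 1 := by nlinarith
    have h2 : 0 ≤ (i:ℝ) * (y a) * (a ^ 2 - 1) := by positivity
    nlinarith
  -- derivative of the implicit equation
  have h1 : HasDerivAt (fun b : ℝ => b ^ 2) (2 * a) a := by
    simpa using hasDerivAt_pow 2 a
  have h2 : HasDerivAt (fun b => (y b) ^ 3) (3 * (y a) ^ 2 * y') a := by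
    simpa [mul_comm, mul_assoc, mul_left_comm] using hderiv.fun_pow 3
  have h3 : HasDerivAt (fun b => (y b) ^ 2) (2 * (y a) * y') a := by
    simpa [mul_comm, mul_assoc, mul_left_comm] using hderiv.fun_pow 2
  have hF : HasDerivAt
      (fun b => 2 * b ^ 2 * (y b) ^ 3 + (i:ℝ) * (b ^ 2 - 1) * (y b) ^ 2 - 2 * (y b) - i)
      ((2 * (2 * a)) * (y a) ^ 3 + (2 * a ^ 2) * (3 * (y a) ^ 2 * y')
        + (((i:ℝ) * (2 * a)) * (y a) ^ 2 + ((i:ℝ) * (a ^ 2 - 1)) * (2 * (y a) * y'))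
        - 2 * y') a := by
    exact ((((h1.const_mul 2).mul h2).add
      (((h1.sub_const 1).const_mul (i:ℝ)).mul h3)).sub (hderiv.const_mul 2)).sub_const _
  have h0 : HasDerivAt
      (fun b => 2 * b ^ 2 * (y b) ^ 3 + (i:ℝ) * (b ^ 2 - 1) * (y b) ^ 2 - 2 * (y b) - i)
      0 a := by
    have : (fun b => 2 * b ^ 2 * (y b) ^ 3 + (i:ℝ) * (b ^ 2 - 1) * (y b) ^ 2 - 2 * (y b) - i)
        =ᶠ[nhds a] fun _ => (0:ℝ) := hroot
    exact (hasDerivAt_const a (0:ℝ)).congr_of_eventuallyEq this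
  have hzero := hF.unique h0
  -- key algebraic identity
  have hkey : y' * ((i:ℝ) * (y a) * (a ^ 2 - 1) + 3 * a ^ 2 * (y a) ^ 2 - 1)
      = -a * (y a) ^ 2 * ((i:ℝ) + 2 * y a) := by nlinarith [hzero]
  have heq : y' = -a * (y a) ^ 2 * ((i:ℝ) + 2 * y a) /
      ((i:ℝ) * (y a) * (a ^ 2 - 1) + 3 * a ^ 2 * (y a) ^ 2 - 1) := by
    rw [eq_div_iff hD.ne']
    linarith [hkey]
  refine ⟨heq, ?_⟩
  rw [heq]
  apply div_neg_of_neg_of_pos _ hD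
  have h4 : 0 < a * (y a) ^ 2 * ((i:ℝ) + 2 * y a) := by positivity
  linarith
end

section
/- For every integer n ≥ 2 there exists a unique ā_n > √2 satisfying tan(π/n) = 2√(ā_n² - 1)/(ā_n² - 2); in particular ā_2 = √2 cannot be exceeded by any a < √2 (no 4-periodic pantographic-like orbit exists for a < √2), and ā_3 = 2 (no 6-periodic pantographic-like orbit exists for a < 2). -/
open Real

lemma aux_exu (s c : ℝ) (hs : 0 < s) (hc : 0 ≤ c) (hsc : s ^ 2 + c ^ 2 = 1) :
    ∃! x : ℝ, Real.sqrt 2 ≤ x ∧ s * (x ^ 2 - 2) = 2 * c * Real.sqrt (x ^ 2 - 1) := by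
  set u : ℝ := (1 + c) / s with hu
  have hs1 : s ≤ 1 := by nlinarith
  have hu1 : 1 ≤ u := (le_div_iff₀ hs).2 (by linarith)
  have hu0 : 0 ≤ u := by linarith
  have hsu : s * u = 1 + c := by rw [hu]; field_simp
  refine ⟨Real.sqrt (1 + u ^ 2), ⟨?_, ?_⟩, ?_⟩
  · apply Real.sqrt_le_sqrt; nlinarith
  · have hx2 : (Real.sqrt (1 + u ^ 2)) ^ 2 = 1 + u ^ 2 := Real.sq_sqrt (by positivity)
    rw [hx2]
    have : (1 + u ^ 2) - 1 = u ^ 2 := by ring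
    rw [this, Real.sqrt_sq hu0]
    nlinarith
  · rintro x ⟨hx1, hx2⟩
    have hx0 : 0 ≤ x := le_trans (Real.sqrt_nonneg 2) hx1
    have h2 : (2 : ℝ) ≤ x ^ 2 := by
      have := Real.sq_sqrt (by norm_num : (2:ℝ) ≥ 0)
      nlinarith [Real.sqrt_nonneg 2]
    set v : ℝ := Real.sqrt (x ^ 2 - 1) with hv
    have hv2 : v ^ 2 = x ^ 2 - 1 := Real.sq_sqrt (by linarith)
    have hv1 : 1 ≤ v := by
      nlinarith [Real.sqrt_nonneg (x ^ 2 - 1)]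
    have heq : s * (v ^ 2 - 1) = 2 * c * v := by rw [hv2]; linarith [hx2]
    have hfac : (s * v - (1 + c)) * (s * v + (1 - c)) = 0 := by nlinarith
    have hpos : s * v + (1 - c) > 0 := by nlinarith
    have hsv : s * v = 1 + c := by
      rcases mul_eq_zero.1 hfac with h | h
      · linarith
      · linarith
    have hvu : v = u := by
      rw [hu, eq_div_iff hs.ne']
      linarith [hsv]
    have : x ^ 2 = 1 + u ^ 2 := by rw [← hvu]; linarith [hv2]
    rw [← this, Real.sqrt_sq hx0]

theorem stmt_19 :
    (∀ n : ℕ, 2 ≤ n →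
      ∃! x : ℝ, Real.sqrt 2 ≤ x ∧
        Real.sin (π / n) * (x ^ 2 - 2) = 2 * Real.cos (π / n) * Real.sqrt (x ^ 2 - 1)) ∧
    (Real.sin (π / 2) * ((Real.sqrt 2) ^ 2 - 2) =
      2 * Real.cos (π / 2) * Real.sqrt ((Real.sqrt 2) ^ 2 - 1)) ∧
    (Real.sin (π / 3) * ((2 : ℝ) ^ 2 - 2) =
      2 * Real.cos (π / 3) * Real.sqrt ((2 : ℝ) ^ 2 - 1)) ∧
    (∀ n : ℕ, 3 ≤ n →
      ∀ x : ℝ, Real.sqrt 2 < x →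
        (Real.tan (π / n) = 2 * Real.sqrt (x ^ 2 - 1) / (x ^ 2 - 2) ↔
          Real.sin (π / n) * (x ^ 2 - 2) = 2 * Real.cos (π / n) * Real.sqrt (x ^ 2 - 1))) := by
  refine ⟨?_, ?_, ?_, ?_⟩
  · intro n hn
    have hn0 : (0 : ℝ) < n := by exact_mod_cast Nat.lt_of_lt_of_le Nat.zero_lt_two hn
    have hlt : π / n < π := by
      rw [div_lt_iff₀ hn0]
      have h2 : (1:ℝ) < n := by exact_mod_cast Nat.lt_of_lt_of_le Nat.one_lt_two hn
      nlinarith [Real.pi_pos, mul_lt_mul_of_pos_left h2 Real.pi_pos]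
    have hgt : 0 < π / n := div_pos Real.pi_pos hn0
    have hle : π / n ≤ π / 2 := by
      apply div_le_div_of_nonneg_left Real.pi_pos.le (by norm_num)
      exact_mod_cast hn
    exact aux_exu _ _ (Real.sin_pos_of_pos_of_lt_pi hgt hlt)
      (Real.cos_nonneg_of_mem_Icc ⟨by linarith, hle⟩) (Real.sin_sq_add_cos_sq _)
  · rw [Real.sq_sqrt (by norm_num : (2:ℝ) ≥ 0)]
    simp
  · have h3 : ((2:ℝ) ^ 2 - 1) = 3 := by norm_num
    rw [h3, Real.cos_pi_div_three, Real.sin_pi_div_three]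
    ring
  · intro n hn x hx
    have hn0 : (0 : ℝ) < n := by positivity
    have hgt : 0 < π / n := div_pos Real.pi_pos hn0
    have hlt : π / n < π / 2 := by
      rw [div_lt_div_iff₀ hn0 (by norm_num)]
      have h2 : (2:ℝ) < n := by exact_mod_cast Nat.lt_of_lt_of_le (by norm_num) hn
      nlinarith [Real.pi_pos, mul_lt_mul_of_pos_left h2 Real.pi_pos]
    have hc : 0 < Real.cos (π / n) := Real.cos_pos_of_mem_Ioo ⟨by linarith, hlt⟩
    have hx0 : 0 ≤ x := le_trans (Real.sqrt_nonneg 2) hx.le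
    have h2 : (2 : ℝ) < x ^ 2 := by
      have := Real.sq_sqrt (by norm_num : (2:ℝ) ≥ 0)
      nlinarith [Real.sqrt_nonneg 2]
    have hne : x ^ 2 - 2 ≠ 0 := by linarith
    rw [Real.tan_eq_sin_div_cos, div_eq_div_iff hc.ne' hne]
    constructor <;> intro h <;> linarith
end
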